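/- (Product gadget.) Let H > 0. Consider an exchange market, all of whose agents have Leontief utility functions, containing goods a, b, c, thirteen further distinct goods G_1, …, G_7, h_1, …, h_6, and twelve agents: A_1 with endowment one unit of G_1 and utility y_{G_4}; A_2 with endowment one unit of G_6 and utility y_{G_5}; C_1 with endowment H units of G_2 and utility min(y_{G_1}, y_{h_1}); C_2 with endowment one unit of h_1 and utility y_{G_2}; C_3 with endowment H units of G_7 and utility min(y_{G_6}, y_{h_2}); C_4 with endowment one unit of h_2 and utility y_{G_7}; C_5 with endowment one unit of h_3 and utility min(y_{G_2}, y_{G_7}); C_6 with endowment H units of G_3 and utility min(y_{h_3}, y_{h_4}); C_7 with endowment one unit of h_4 and utility y_{G_3}; C_8 with endowment one unit of h_5 and utility y_{G_3}; C_9 with endowment H units each of G_4 and G_5 and utility min(y_{h_5}, y_{h_6}); and C_10 with endowment one unit of h_6 and utility min(y_{G_4}, y_{G_5}). Assume each of the thirteen goods G_1, …, G_7, h_1, …, h_6 is exclusive to these twelve agents. Suppose (p, (x_i)) is an equilibrium of the whole market whose prices satisfy p_b > 0 and p_{G_1} = p_c, p_{G_2} = 1, p_{G_3} = p_b + 1,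 p_{G_4} = 1, p_{G_5} = p_b, p_{G_6} = p_a, p_{G_7} = p_b, p_{h_1} = H − p_c, p_{h_2} = H·p_b − p_a, p_{h_4} = H·(p_b + 1) − p_{h_3}, and p_{h_6} = H·(p_b + 1) − p_{h_5}. Then p_a = p_b·p_c, and for each of the thirteen goods G_1, …, G_7, h_1, …, h_6 the total consumption (all of it by these twelve agents) equals the total endowment of that good. -/

import Mathlib

open Finset

/-- The Leontief utility function with coefficient vector `A`:
`U(y) = min over {j : A j > 0} of y j / A j` (as the infimum of this finite set). -/
noncomputable def leontief {G : Type*} (A : G → ℝ) (y : G → ℝ) : ℝ :=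
  sInf {t : ℝ | ∃ j, 0 < A j ∧ t = y j / A j}

/-- `x` is an optimal bundle at prices `p` for an agent with budget `budget`
and utility function `U`. -/
def IsOptimalBundle {G : Type*} [Fintype G] (p : G → ℝ) (budget : ℝ)
    (U : (G → ℝ) → ℝ) (x : G → ℝ) : Prop :=
  (∀ j, 0 ≤ x j) ∧ (∑ j, p j * x j ≤ budget) ∧
    ∀ y : G → ℝ, (∀ j, 0 ≤ y j) → (∑ j, p j * y j ≤ budget) → U y ≤ U x

/-- Equilibrium of an exchange market given by endowments `W` and utilities `U`:
prices are nonnegative, every agent gets an optimal affordable bundle, no good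
is over-demanded, and positively priced goods clear exactly. -/
def IsEquilibrium {ι G : Type*} [Fintype ι] [Fintype G]
    (W : ι → G → ℝ) (U : ι → (G → ℝ) → ℝ) (p : G → ℝ) (x : ι → G → ℝ) : Prop :=
  (∀ j, 0 ≤ p j) ∧
  (∀ i, IsOptimalBundle p (∑ j, p j * W i j) (U i) (x i)) ∧
  (∀ j, ∑ i, x i j ≤ ∑ i, W i j) ∧
  (∀ j, 0 < p j → ∑ i, x i j = ∑ i, W i j)

/-- Good `r` is exclusive to the set `S` of agents: every agent outside `S` has
no endowment of `r` and a utility function not depending on the `r`-coordinate. -/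
def ExclusiveGood {ι G : Type*} (W : ι → G → ℝ) (U : ι → (G → ℝ) → ℝ)
    (r : G) (S : Set ι) : Prop :=
  ∀ i ∉ S, W i r = 0 ∧ ∀ y y' : G → ℝ, (∀ j, j ≠ r → y j = y' j) → U i y = U i y'

lemma sum_ite_single {G : Type*} [Fintype G] [DecidableEq G] (p : G → ℝ) (g : G) (c : ℝ) :
    ∑ j, p j * (if j = g then c else 0) = p g * c := by
  simp [mul_ite, Finset.sum_ite_eq']

lemma sum_ite_double {G : Type*} [Fintype G] [DecidableEq G] (p : G → ℝ) {g1 g2 : G} (h : g1 ≠ g2)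
    (c1 c2 : ℝ) :
    ∑ j, p j * (if j = g1 then c1 else if j = g2 then c2 else 0) = p g1 * c1 + p g2 * c2 := by
  have key : ∀ j, p j * (if j = g1 then c1 else if j = g2 then c2 else 0) =
      p j * (if j = g1 then c1 else 0) + p j * (if j = g2 then c2 else 0) := by
    intro j
    by_cases h1 : j = g1 <;> by_cases h2 : j = g2 <;> simp_all
  simp only [key, Finset.sum_add_distrib, sum_ite_single]

lemma lin_lb {G : Type*} [Fintype G] [DecidableEq G] {p : G → ℝ} {B : ℝ} {g : G} {x : G → ℝ}
    (hB : 0 ≤ B) (hg : 0 < p g)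
    (hx : IsOptimalBundle p B (fun y => y g) x) : B / p g ≤ x g := by
  have h := hx.2.2 (fun j => if j = g then B / p g else 0)
    (fun j => by split <;> positivity)
    (by rw [sum_ite_single, mul_div_cancel₀ _ (ne_of_gt hg)])
  simpa using h

lemma min_lb {G : Type*} [Fintype G] [DecidableEq G] {p : G → ℝ} {B : ℝ} {g1 g2 : G} {x : G → ℝ}
    (hB : 0 ≤ B) (hne : g1 ≠ g2) (hps : 0 < p g1 + p g2)
    (hx : IsOptimalBundle p B (fun y => min (y g1) (y g2)) x) :
    B / (p g1 + p g2) ≤ x g1 ∧ B / (p g1 + p g2) ≤ x g2 := by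
  set t := B / (p g1 + p g2) with ht
  have ht0 : 0 ≤ t := div_nonneg hB hps.le
  have h := hx.2.2 (fun j => if j = g1 then t else if j = g2 then t else 0)
    (fun j => by split
                 · exact ht0
                 · split
                   · exact ht0
                   · exact le_rfl)
    (by have e : ∑ j, p j * (if j = g1 then t else if j = g2 then t else 0) = B := by
          rw [sum_ite_double p hne, ht]; field_simp
        simpa using e.le)
  have h2 : t ≤ min (x g1) (x g2) := by
    simpa [hne.symm] using h
  exact ⟨h2.trans (min_le_left _ _), h2.trans (min_le_right _ _)⟩

lemma sum_le_univ {ι : Type*} [Fintype ι] (f : ι → ℝ) (hf : ∀ i, 0 ≤ f i) (s : Finset ι) :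
    ∑ i ∈ s, f i ≤ ∑ i, f i :=
  Finset.sum_le_sum_of_subset_of_nonneg (Finset.subset_univ s) (fun i _ _ => hf i)

lemma pair_le_sum {ι : Type*} [Fintype ι] [DecidableEq ι] (f : ι → ℝ) (hf : ∀ i, 0 ≤ f i)
    {i1 i2 : ι} (h : i1 ≠ i2) : f i1 + f i2 ≤ ∑ i, f i := by
  rw [← Finset.sum_pair h]; exact sum_le_univ f hf _

lemma triple_le_sum {ι : Type*} [Fintype ι] [DecidableEq ι] (f : ι → ℝ) (hf : ∀ i, 0 ≤ f i)
    {i0 i1 i2 : ι} (h01 : i0 ≠ i1) (h02 : i0 ≠ i2) (h12 : i1 ≠ i2) :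
    f i0 + (f i1 + f i2) ≤ ∑ i, f i := by
  rw [← Finset.sum_pair h12, ← Finset.sum_insert (by simp [h01, h02])]
  exact sum_le_univ f hf _

lemma clear_single {ι : Type*} [Fintype ι] [DecidableEq ι] (f : ι → ℝ) (hf : ∀ i, 0 ≤ f i)
    (i1 : ι) (T : ℝ) (hub : ∑ i, f i ≤ T) (hlb : T ≤ f i1) :
    ∑ i, f i = T ∧ ∀ i, i ≠ i1 → f i = 0 := by
  have h1 : f i1 ≤ ∑ i, f i := Finset.single_le_sum (fun i _ => hf i) (Finset.mem_univ i1)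
  refine ⟨le_antisymm hub (hlb.trans h1), fun i hi => ?_⟩
  have h2 := pair_le_sum f hf hi
  have := hf i
  linarith

lemma clear_pair {ι : Type*} [Fintype ι] [DecidableEq ι] (f : ι → ℝ) (hf : ∀ i, 0 ≤ f i)
    {i1 i2 : ι} (h12 : i1 ≠ i2) (T : ℝ) (hub : ∑ i, f i ≤ T) (hlb : T ≤ f i1 + f i2) :
    ∑ i, f i = T ∧ ∀ i, i ≠ i1 → i ≠ i2 → f i = 0 := by
  have h1 := pair_le_sum f hf h12
  refine ⟨le_antisymm hub (hlb.trans h1), fun i hi1 hi2 => ?_⟩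
  have h2 := triple_le_sum f hf hi1 hi2 h12
  have := hf i
  linarith

lemma sum_eq_single_agent {ι : Type*} [Fintype ι] (f : ι → ℝ) (o : ι)
    (h : ∀ i, i ≠ o → f i = 0) : ∑ i, f i = f o :=
  Finset.sum_eq_single_of_mem o (Finset.mem_univ o) (fun i _ hi => h i hi)

set_option maxHeartbeats 1600000 in
/-- **Product gadget.** In an exchange market in which every
agent has a Leontief utility function, containing the twelve-agent product
gadget on goods `a, b, c` and thirteen further exclusive goods
`G_1, …, G_7, h_1, …, h_6` (here `Gg 0, …, Gg 6, hh 0, …, hh 5`), every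
equilibrium whose prices satisfy `p b > 0` and the listed price relations also
satisfies `p a = p b · p c`, and each of the thirteen exclusive goods is exactly
cleared, all of its consumption being by the twelve gadget agents. -/
theorem product_gadget {ι G : Type*} [Fintype ι] [Fintype G] [DecidableEq G]
    (W : ι → G → ℝ) (U : ι → (G → ℝ) → ℝ) (hW : ∀ i j, 0 ≤ W i j)
    (hLeon : ∀ i, ∃ A : G → ℝ, (∀ j, 0 ≤ A j) ∧ A ≠ 0 ∧ U i = leontief A)
    (H : ℝ) (hH : 0 < H)
    (a b c : G) (Gg : Fin 7 → G) (hh : Fin 6 → G)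
    (hdist : ([a, b, c, Gg 0, Gg 1, Gg 2, Gg 3, Gg 4, Gg 5, Gg 6,
               hh 0, hh 1, hh 2, hh 3, hh 4, hh 5] : List G).Pairwise (· ≠ ·))
    (A1 A2 C1 C2 C3 C4 C5 C6 C7 C8 C9 C10 : ι)
    (hadist : ([A1, A2, C1, C2, C3, C4, C5, C6, C7, C8, C9, C10] : List ι).Pairwise (· ≠ ·))
    (hWA1 : W A1 = fun j => if j = Gg 0 then 1 else 0)
    (hUA1 : U A1 = fun y => y (Gg 3))
    (hWA2 : W A2 = fun j => if j = Gg 5 then 1 else 0)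
    (hUA2 : U A2 = fun y => y (Gg 4))
    (hWC1 : W C1 = fun j => if j = Gg 1 then H else 0)
    (hUC1 : U C1 = fun y => min (y (Gg 0)) (y (hh 0)))
    (hWC2 : W C2 = fun j => if j = hh 0 then 1 else 0)
    (hUC2 : U C2 = fun y => y (Gg 1))
    (hWC3 : W C3 = fun j => if j = Gg 6 then H else 0)
    (hUC3 : U C3 = fun y => min (y (Gg 5)) (y (hh 1)))
    (hWC4 : W C4 = fun j => if j = hh 1 then 1 else 0)
    (hUC4 : U C4 = fun y => y (Gg 6))
    (hWC5 : W C5 = fun j => if j = hh 2 then 1 else 0)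
    (hUC5 : U C5 = fun y => min (y (Gg 1)) (y (Gg 6)))
    (hWC6 : W C6 = fun j => if j = Gg 2 then H else 0)
    (hUC6 : U C6 = fun y => min (y (hh 2)) (y (hh 3)))
    (hWC7 : W C7 = fun j => if j = hh 3 then 1 else 0)
    (hUC7 : U C7 = fun y => y (Gg 2))
    (hWC8 : W C8 = fun j => if j = hh 4 then 1 else 0)
    (hUC8 : U C8 = fun y => y (Gg 2))
    (hWC9 : W C9 = fun j => if j = Gg 3 then H else if j = Gg 4 then H else 0)
    (hUC9 : U C9 = fun y => min (y (hh 4)) (y (hh 5)))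
    (hWC10 : W C10 = fun j => if j = hh 5 then 1 else 0)
    (hUC10 : U C10 = fun y => min (y (Gg 3)) (y (Gg 4)))
    (hexG : ∀ k : Fin 7, ExclusiveGood W U (Gg k)
      ({A1, A2, C1, C2, C3, C4, C5, C6, C7, C8, C9, C10} : Set ι))
    (hexh : ∀ k : Fin 6, ExclusiveGood W U (hh k)
      ({A1, A2, C1, C2, C3, C4, C5, C6, C7, C8, C9, C10} : Set ι))
    (p : G → ℝ) (x : ι → G → ℝ) (heq : IsEquilibrium W U p x)
    (hpb : 0 < p b)
    (hp1 : p (Gg 0) = p c) (hp2 : p (Gg 1) = 1) (hp3 : p (Gg 2) = p b + 1)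
    (hp4 : p (Gg 3) = 1) (hp5 : p (Gg 4) = p b) (hp6 : p (Gg 5) = p a)
    (hp7 : p (Gg 6) = p b)
    (hph1 : p (hh 0) = H - p c) (hph2 : p (hh 1) = H * p b - p a)
    (hph4 : p (hh 3) = H * (p b + 1) - p (hh 2))
    (hph6 : p (hh 5) = H * (p b + 1) - p (hh 4)) :
    p a = p b * p c ∧
      (∀ k : Fin 7, (∑ i, x i (Gg k) = ∑ i, W i (Gg k)) ∧
        ∀ i, i ∉ ({A1, A2, C1, C2, C3, C4, C5, C6, C7, C8, C9, C10} : Set ι) →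
          x i (Gg k) = 0) ∧
      (∀ k : Fin 6, (∑ i, x i (hh k) = ∑ i, W i (hh k)) ∧
        ∀ i, i ∉ ({A1, A2, C1, C2, C3, C4, C5, C6, C7, C8, C9, C10} : Set ι) →
          x i (hh k) = 0) := by
  
  classical
  obtain ⟨hp, hopt, hfeas, -⟩ := heq
  have hx0 : ∀ i j, 0 ≤ x i j := fun i j => (hopt i).1 j
  simp only [List.pairwise_cons, List.mem_cons, List.not_mem_nil, or_false,
    List.mem_singleton, forall_eq_or_imp, forall_eq] at hdist hadist
  obtain ⟨⟨hg0_1, hg0_2, hg0_3, hg0_4, hg0_5, hg0_6, hg0_7, hg0_8, hg0_9, hg0_10, hg0_11, hg0_12, hg0_13, hg0_14, hg0_15⟩, ⟨hg1_2, hg1_3, hg1_4, hg1_5, hg1_6, hg1_7, hg1_8, hg1_9, hg1_10, hg1_11, hg1_12, hg1_13, hg1_14, hg1_15⟩, ⟨hg2_3, hg2_4, hg2_5, hg2_6, hg2_7, hg2_8, hg2_9, hg2_10, hg2_11, hg2_12, hg2_13, hg2_14, hg2_15⟩, ⟨hg3_4, hg3_5, hg3_6, hg3_7, hg3_8, hg3_9,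 hg3_10, hg3_11, hg3_12, hg3_13, hg3_14, hg3_15⟩, ⟨hg4_5, hg4_6, hg4_7, hg4_8, hg4_9, hg4_10, hg4_11, hg4_12, hg4_13, hg4_14, hg4_15⟩, ⟨hg5_6, hg5_7, hg5_8, hg5_9, hg5_10, hg5_11, hg5_12, hg5_13, hg5_14, hg5_15⟩, ⟨hg6_7, hg6_8, hg6_9, hg6_10, hg6_11, hg6_12, hg6_13, hg6_14, hg6_15⟩, ⟨hg7_8, hg7_9, hg7_10, hg7_11, hg7_12, hg7_13, hg7_14, hg7_15⟩, ⟨hg8_9, hg8_10, hg8_11, hg8_12, hg8_13, hg8_14, hg8_15⟩, ⟨hg9_10, hg9_11, hg9_12, hg9_13, hg9_14, hg9_15⟩, ⟨hg10_11, hg10_12, hg10_13, hg10_14, hg10_15⟩, ⟨hg11_12, hg11_13, hg11_14, hg11_15⟩, ⟨hg12_13, hg12_14, hg12_15⟩, ⟨hg13_14, hg13_15⟩, hg14_15, -⟩ := hdist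
  obtain ⟨⟨ha0_1, ha0_2, ha0_3, ha0_4, ha0_5, ha0_6, ha0_7, ha0_8, ha0_9, ha0_10, ha0_11⟩, ⟨ha1_2, ha1_3, ha1_4, ha1_5, ha1_6, ha1_7, ha1_8, ha1_9, ha1_10, ha1_11⟩, ⟨ha2_3, ha2_4, ha2_5, ha2_6, ha2_7, ha2_8, ha2_9, ha2_10, ha2_11⟩, ⟨ha3_4, ha3_5, ha3_6, ha3_7, ha3_8, ha3_9, ha3_10, ha3_11⟩, ⟨ha4_5, ha4_6, ha4_7, ha4_8, ha4_9, ha4_10, ha4_11⟩, ⟨ha5_6, ha5_7, ha5_8, ha5_9, ha5_10, ha5_11⟩, ⟨ha6_7, ha6_8, ha6_9, ha6_10, ha6_11⟩, ⟨ha7_8, ha7_9, ha7_10, ha7_11⟩, ⟨ha8_9, ha8_10, ha8_11⟩, ⟨ha9_10, ha9_11⟩, ha10_11, -⟩ := hadist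
  have hb1 : (0:ℝ) < 1 + p b := by linarith
  have hb1' : (0:ℝ) < p b + 1 := by linarith
  have hout : ∀ i : ι, i ∉ ({A1, A2, C1, C2, C3, C4, C5, C6, C7, C8, C9, C10} : Set ι) →
      i ≠ A1 ∧ i ≠ A2 ∧ i ≠ C1 ∧ i ≠ C2 ∧ i ≠ C3 ∧ i ≠ C4 ∧ i ≠ C5 ∧ i ≠ C6 ∧ i ≠ C7 ∧
        i ≠ C8 ∧ i ≠ C9 ∧ i ≠ C10 := by
    intro i hi
    simp only [Set.mem_insert_iff, Set.mem_singleton_iff, not_or] at hi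
    exact ⟨hi.1, hi.2.1, hi.2.2.1, hi.2.2.2.1, hi.2.2.2.2.1, hi.2.2.2.2.2.1,
      hi.2.2.2.2.2.2.1, hi.2.2.2.2.2.2.2.1, hi.2.2.2.2.2.2.2.2.1,
      hi.2.2.2.2.2.2.2.2.2.1, hi.2.2.2.2.2.2.2.2.2.2.1, hi.2.2.2.2.2.2.2.2.2.2.2⟩
  have hsplit : ∀ r : G,
      (∀ i : ι, i ∉ ({A1, A2, C1, C2, C3, C4, C5, C6, C7, C8, C9, C10} : Set ι) → W i r = 0) →
      ∑ i, W i r = W A1 r + W A2 r + W C1 r + W C2 r + W C3 r + W C4 r + W C5 r + W C6 r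
        + W C7 r + W C8 r + W C9 r + W C10 r := by
    intro r h0
    have h1 : ∑ i, W i r
        = ∑ i ∈ ({A1, A2, C1, C2, C3, C4, C5, C6, C7, C8, C9, C10} : Finset ι), W i r := by
      symm
      apply Finset.sum_subset (Finset.subset_univ _)
      intro i _ hi
      apply h0
      simp only [Finset.mem_insert, Finset.mem_singleton] at hi
      simp only [Set.mem_insert_iff, Set.mem_singleton_iff]
      exact hi
    rw [h1]
    rw [Finset.sum_insert (by simp [ha0_1, ha0_2, ha0_3, ha0_4, ha0_5, ha0_6, ha0_7, ha0_8, ha0_9, ha0_10, ha0_11]),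
        Finset.sum_insert (by simp [ha1_2, ha1_3, ha1_4, ha1_5, ha1_6, ha1_7, ha1_8, ha1_9, ha1_10, ha1_11]),
        Finset.sum_insert (by simp [ha2_3, ha2_4, ha2_5, ha2_6, ha2_7, ha2_8, ha2_9, ha2_10, ha2_11]),
        Finset.sum_insert (by simp [ha3_4, ha3_5, ha3_6, ha3_7, ha3_8, ha3_9, ha3_10, ha3_11]),
        Finset.sum_insert (by simp [ha4_5, ha4_6, ha4_7, ha4_8, ha4_9, ha4_10, ha4_11]),
        Finset.sum_insert (by simp [ha5_6, ha5_7, ha5_8, ha5_9, ha5_10, ha5_11]),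
        Finset.sum_insert (by simp [ha6_7, ha6_8, ha6_9, ha6_10, ha6_11]),
        Finset.sum_insert (by simp [ha7_8, ha7_9, ha7_10, ha7_11]),
        Finset.sum_insert (by simp [ha8_9, ha8_10, ha8_11]),
        Finset.sum_insert (by simp [ha9_10, ha9_11]),
        Finset.sum_pair ha10_11]
    ring
  have sup3 : ∑ i, W i (Gg 0) = 1 := by
    rw [hsplit _ (fun i hi => (hexG 0 i hi).1)]
    simp [hWA1, hWA2, hWC1, hWC2, hWC3, hWC4, hWC5, hWC6, hWC7, hWC8, hWC9, hWC10, hg3_4, hg3_5, hg3_6, hg3_7, hg3_8, hg3_9, hg3_10, hg3_11, hg3_12, hg3_13, hg3_14, hg3_15]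
  have sup4 : ∑ i, W i (Gg 1) = H := by
    rw [hsplit _ (fun i hi => (hexG 1 i hi).1)]
    simp [hWA1, hWA2, hWC1, hWC2, hWC3, hWC4, hWC5, hWC6, hWC7, hWC8, hWC9, hWC10, (hg3_4).symm, hg4_5, hg4_6, hg4_7, hg4_8, hg4_9, hg4_10, hg4_11, hg4_12, hg4_13, hg4_14, hg4_15]
  have sup5 : ∑ i, W i (Gg 2) = H := by
    rw [hsplit _ (fun i hi => (hexG 2 i hi).1)]
    simp [hWA1, hWA2, hWC1, hWC2, hWC3, hWC4, hWC5, hWC6, hWC7, hWC8, hWC9, hWC10, (hg3_5).symm, (hg4_5).symm, hg5_6, hg5_7, hg5_8, hg5_9, hg5_10, hg5_11, hg5_12, hg5_13, hg5_14, hg5_15]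
  have sup6 : ∑ i, W i (Gg 3) = H := by
    rw [hsplit _ (fun i hi => (hexG 3 i hi).1)]
    simp [hWA1, hWA2, hWC1, hWC2, hWC3, hWC4, hWC5, hWC6, hWC7, hWC8, hWC9, hWC10, (hg3_6).symm, (hg4_6).symm, (hg5_6).symm, hg6_7, hg6_8, hg6_9, hg6_10, hg6_11, hg6_12, hg6_13, hg6_14, hg6_15]
  have sup7 : ∑ i, W i (Gg 4) = H := by
    rw [hsplit _ (fun i hi => (hexG 4 i hi).1)]
    simp [hWA1, hWA2, hWC1, hWC2, hWC3, hWC4, hWC5, hWC6, hWC7, hWC8, hWC9, hWC10, (hg3_7).symm, (hg4_7).symm, (hg5_7).symm, (hg6_7).symm, hg7_8, hg7_9, hg7_10, hg7_11, hg7_12, hg7_13, hg7_14, hg7_15]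
  have sup8 : ∑ i, W i (Gg 5) = 1 := by
    rw [hsplit _ (fun i hi => (hexG 5 i hi).1)]
    simp [hWA1, hWA2, hWC1, hWC2, hWC3, hWC4, hWC5, hWC6, hWC7, hWC8, hWC9, hWC10, (hg3_8).symm, (hg4_8).symm, (hg5_8).symm, (hg6_8).symm, (hg7_8).symm, hg8_9, hg8_10, hg8_11, hg8_12, hg8_13, hg8_14, hg8_15]
  have sup9 : ∑ i, W i (Gg 6) = H := by
    rw [hsplit _ (fun i hi => (hexG 6 i hi).1)]
    simp [hWA1, hWA2, hWC1, hWC2, hWC3, hWC4, hWC5, hWC6, hWC7, hWC8, hWC9, hWC10, (hg3_9).symm, (hg4_9).symm, (hg5_9).symm, (hg6_9).symm, (hg7_9).symm, (hg8_9).symm, hg9_10, hg9_11, hg9_12, hg9_13, hg9_14, hg9_15]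
  have sup10 : ∑ i, W i (hh 0) = 1 := by
    rw [hsplit _ (fun i hi => (hexh 0 i hi).1)]
    simp [hWA1, hWA2, hWC1, hWC2, hWC3, hWC4, hWC5, hWC6, hWC7, hWC8, hWC9, hWC10, (hg3_10).symm, (hg4_10).symm, (hg5_10).symm, (hg6_10).symm, (hg7_10).symm, (hg8_10).symm, (hg9_10).symm, hg10_11, hg10_12, hg10_13, hg10_14, hg10_15]
  have sup11 : ∑ i, W i (hh 1) = 1 := by
    rw [hsplit _ (fun i hi => (hexh 1 i hi).1)]
    simp [hWA1, hWA2, hWC1, hWC2, hWC3, hWC4, hWC5, hWC6, hWC7, hWC8, hWC9, hWC10, (hg3_11).symm, (hg4_11).symm, (hg5_11).symm, (hg6_11).symm, (hg7_11).symm, (hg8_11).symm, (hg9_11).symm, (hg10_11).symm, hg11_12, hg11_13, hg11_14, hg11_15]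
  have sup12 : ∑ i, W i (hh 2) = 1 := by
    rw [hsplit _ (fun i hi => (hexh 2 i hi).1)]
    simp [hWA1, hWA2, hWC1, hWC2, hWC3, hWC4, hWC5, hWC6, hWC7, hWC8, hWC9, hWC10, (hg3_12).symm, (hg4_12).symm, (hg5_12).symm, (hg6_12).symm, (hg7_12).symm, (hg8_12).symm, (hg9_12).symm, (hg10_12).symm, (hg11_12).symm, hg12_13, hg12_14, hg12_15]
  have sup13 : ∑ i, W i (hh 3) = 1 := by
    rw [hsplit _ (fun i hi => (hexh 3 i hi).1)]
    simp [hWA1, hWA2, hWC1, hWC2, hWC3, hWC4, hWC5, hWC6, hWC7, hWC8, hWC9, hWC10, (hg3_13).symm, (hg4_13).symm, (hg5_13).symm, (hg6_13).symm, (hg7_13).symm, (hg8_13).symm, (hg9_13).symm, (hg10_13).symm, (hg11_13).symm, (hg12_13).symm, hg13_14, hg13_15]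
  have sup14 : ∑ i, W i (hh 4) = 1 := by
    rw [hsplit _ (fun i hi => (hexh 4 i hi).1)]
    simp [hWA1, hWA2, hWC1, hWC2, hWC3, hWC4, hWC5, hWC6, hWC7, hWC8, hWC9, hWC10, (hg3_14).symm, (hg4_14).symm, (hg5_14).symm, (hg6_14).symm, (hg7_14).symm, (hg8_14).symm, (hg9_14).symm, (hg10_14).symm, (hg11_14).symm, (hg12_14).symm, (hg13_14).symm, hg14_15]
  have sup15 : ∑ i, W i (hh 5) = 1 := by
    rw [hsplit _ (fun i hi => (hexh 5 i hi).1)]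
    simp [hWA1, hWA2, hWC1, hWC2, hWC3, hWC4, hWC5, hWC6, hWC7, hWC8, hWC9, hWC10, (hg3_15).symm, (hg4_15).symm, (hg5_15).symm, (hg6_15).symm, (hg7_15).symm, (hg8_15).symm, (hg9_15).symm, (hg10_15).symm, (hg11_15).symm, (hg12_15).symm, (hg13_15).symm, (hg14_15).symm]
  have cap3 : ∑ i, x i (Gg 0) ≤ 1 := le_of_le_of_eq (hfeas _) sup3
  have cap4 : ∑ i, x i (Gg 1) ≤ H := le_of_le_of_eq (hfeas _) sup4
  have cap5 : ∑ i, x i (Gg 2) ≤ H := le_of_le_of_eq (hfeas _) sup5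
  have cap6 : ∑ i, x i (Gg 3) ≤ H := le_of_le_of_eq (hfeas _) sup6
  have cap7 : ∑ i, x i (Gg 4) ≤ H := le_of_le_of_eq (hfeas _) sup7
  have cap8 : ∑ i, x i (Gg 5) ≤ 1 := le_of_le_of_eq (hfeas _) sup8
  have cap9 : ∑ i, x i (Gg 6) ≤ H := le_of_le_of_eq (hfeas _) sup9
  have cap10 : ∑ i, x i (hh 0) ≤ 1 := le_of_le_of_eq (hfeas _) sup10
  have cap11 : ∑ i, x i (hh 1) ≤ 1 := le_of_le_of_eq (hfeas _) sup11
  have cap12 : ∑ i, x i (hh 2) ≤ 1 := le_of_le_of_eq (hfeas _) sup12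
  have cap13 : ∑ i, x i (hh 3) ≤ 1 := le_of_le_of_eq (hfeas _) sup13
  have cap14 : ∑ i, x i (hh 4) ≤ 1 := le_of_le_of_eq (hfeas _) sup14
  have cap15 : ∑ i, x i (hh 5) ≤ 1 := le_of_le_of_eq (hfeas _) sup15
  -- agent optimality facts
  have oA1 := hopt A1
  rw [hUA1] at oA1
  simp only [hWA1] at oA1
  rw [sum_ite_single] at oA1
  have LA1 : p c ≤ x A1 (Gg 3) := by
    have h := lin_lb (mul_nonneg (hp _) zero_le_one) (by rw [hp4]; norm_num) oA1
    rw [hp1, hp4] at h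
    simpa using h
  have oA2 := hopt A2
  rw [hUA2] at oA2
  simp only [hWA2] at oA2
  rw [sum_ite_single] at oA2
  have LA2 : p a / p b ≤ x A2 (Gg 4) := by
    have h := lin_lb (mul_nonneg (hp _) zero_le_one) (by rw [hp5]; exact hpb) oA2
    rw [hp6, hp5] at h
    simpa using h
  have oC1 := hopt C1
  rw [hUC1] at oC1
  simp only [hWC1] at oC1
  rw [sum_ite_single] at oC1
  have LC1 : 1 ≤ x C1 (Gg 0) ∧ 1 ≤ x C1 (hh 0) := by
    have hps : 0 < p (Gg 0) + p (hh 0) := by rw [hp1, hph1]; linarith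
    have h := min_lb (mul_nonneg (hp _) hH.le) hg3_10 hps oC1
    rw [hp2, hp1, hph1] at h
    have e : 1 * H / (p c + (H - p c)) = 1 := by
      rw [show p c + (H - p c) = H by ring, one_mul, div_self hH.ne']
    rw [e] at h
    exact h
  have oC2 := hopt C2
  rw [hUC2] at oC2
  simp only [hWC2] at oC2
  rw [sum_ite_single] at oC2
  have LC2 : H - p c ≤ x C2 (Gg 1) := by
    have h := lin_lb (mul_nonneg (hp _) zero_le_one) (by rw [hp2]; norm_num) oC2
    rw [hph1, hp2] at h
    simpa using h
  have oC3 := hopt C3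
  rw [hUC3] at oC3
  simp only [hWC3] at oC3
  rw [sum_ite_single] at oC3
  have LC3 : 1 ≤ x C3 (Gg 5) ∧ 1 ≤ x C3 (hh 1) := by
    have hps : 0 < p (Gg 5) + p (hh 1) := by
      rw [hp6, hph2]; linarith [mul_pos hH hpb]
    have h := min_lb (mul_nonneg (hp _) hH.le) hg8_11 hps oC3
    rw [hp7, hp6, hph2] at h
    have e : p b * H / (p a + (H * p b - p a)) = 1 := by
      rw [show p a + (H * p b - p a) = H * p b by ring,
        show p b * H = H * p b from mul_comm _ _, div_self (mul_pos hH hpb).ne']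
    rw [e] at h
    exact h
  have oC4 := hopt C4
  rw [hUC4] at oC4
  simp only [hWC4] at oC4
  rw [sum_ite_single] at oC4
  have LC4 : (H * p b - p a) / p b ≤ x C4 (Gg 6) := by
    have h := lin_lb (mul_nonneg (hp _) zero_le_one) (by rw [hp7]; exact hpb) oC4
    rw [hph2, hp7] at h
    simpa using h
  have oC5 := hopt C5
  rw [hUC5] at oC5
  simp only [hWC5] at oC5
  rw [sum_ite_single] at oC5
  have LC5 : p (hh 2) / (1 + p b) ≤ x C5 (Gg 1) ∧ p (hh 2) / (1 + p b) ≤ x C5 (Gg 6) := by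
    have hps : 0 < p (Gg 1) + p (Gg 6) := by rw [hp2, hp7]; linarith
    have h := min_lb (mul_nonneg (hp _) zero_le_one) hg4_9 hps oC5
    rw [hp2, hp7] at h
    simp only [mul_one] at h
    exact h
  have oC6 := hopt C6
  rw [hUC6] at oC6
  simp only [hWC6] at oC6
  rw [sum_ite_single] at oC6
  have LC6 : 1 ≤ x C6 (hh 2) ∧ 1 ≤ x C6 (hh 3) := by
    have hps : 0 < p (hh 2) + p (hh 3) := by
      rw [hph4]; linarith [mul_pos hH hb1']
    have h := min_lb (mul_nonneg (hp _) hH.le) hg12_13 hps oC6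
    rw [hp3, hph4] at h
    have e : (p b + 1) * H / (p (hh 2) + (H * (p b + 1) - p (hh 2))) = 1 := by
      rw [show p (hh 2) + (H * (p b + 1) - p (hh 2)) = H * (p b + 1) by ring,
        show (p b + 1) * H = H * (p b + 1) from mul_comm _ _,
        div_self (mul_pos hH hb1').ne']
    rw [e] at h
    exact h
  have oC7 := hopt C7
  rw [hUC7] at oC7
  simp only [hWC7] at oC7
  rw [sum_ite_single] at oC7
  have LC7 : (H * (p b + 1) - p (hh 2)) / (p b + 1) ≤ x C7 (Gg 2) := by
    have h := lin_lb (mul_nonneg (hp _) zero_le_one) (by rw [hp3]; linarith) oC7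
    rw [hph4, hp3] at h
    simpa using h
  have oC8 := hopt C8
  rw [hUC8] at oC8
  simp only [hWC8] at oC8
  rw [sum_ite_single] at oC8
  have LC8 : p (hh 4) / (p b + 1) ≤ x C8 (Gg 2) := by
    have h := lin_lb (mul_nonneg (hp _) zero_le_one) (by rw [hp3]; linarith) oC8
    rw [hp3] at h
    simpa using h
  have oC9 := hopt C9
  rw [hUC9] at oC9
  simp only [hWC9] at oC9
  rw [sum_ite_double p hg6_7 H H] at oC9
  have LC9 : 1 ≤ x C9 (hh 4) ∧ 1 ≤ x C9 (hh 5) := by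
    have hps : 0 < p (hh 4) + p (hh 5) := by
      rw [hph6]; linarith [mul_pos hH hb1']
    have hB : 0 ≤ p (Gg 3) * H + p (Gg 4) * H :=
      add_nonneg (mul_nonneg (hp _) hH.le) (mul_nonneg (hp _) hH.le)
    have h := min_lb hB hg14_15 hps oC9
    rw [hp4, hp5, hph6] at h
    have e : (1 * H + p b * H) / (p (hh 4) + (H * (p b + 1) - p (hh 4))) = 1 := by
      rw [show p (hh 4) + (H * (p b + 1) - p (hh 4)) = H * (p b + 1) by ring,
        show 1 * H + p b * H = H * (p b + 1) by ring, div_self (mul_pos hH hb1').ne']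
    rw [e] at h
    exact h
  have oC10 := hopt C10
  rw [hUC10] at oC10
  simp only [hWC10] at oC10
  rw [sum_ite_single] at oC10
  have LC10 : (H * (p b + 1) - p (hh 4)) / (1 + p b) ≤ x C10 (Gg 3) ∧
      (H * (p b + 1) - p (hh 4)) / (1 + p b) ≤ x C10 (Gg 4) := by
    have hps : 0 < p (Gg 3) + p (Gg 4) := by rw [hp4, hp5]; linarith
    have h := min_lb (mul_nonneg (hp _) zero_le_one) hg6_7 hps oC10
    rw [hph6, hp4, hp5] at h
    simp only [mul_one] at h
    exact h
  -- key inequalities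
  have hpairG2 : x C2 (Gg 1) + x C5 (Gg 1) ≤ ∑ i, x i (Gg 1) :=
    pair_le_sum (fun i => x i (Gg 1)) (fun i => hx0 i _) ha3_6
  have i2 : p (hh 2) / (1 + p b) ≤ p c := by linarith [LC5.1, cap4, hpairG2]
  have eC4 : (H * p b - p a) / p b = H - p a / p b := by
    rw [sub_div, mul_div_cancel_right₀ _ hpb.ne']
  have hpairG7 : x C4 (Gg 6) + x C5 (Gg 6) ≤ ∑ i, x i (Gg 6) :=
    pair_le_sum (fun i => x i (Gg 6)) (fun i => hx0 i _) ha5_6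
  have i7 : p (hh 2) / (1 + p b) ≤ p a / p b := by linarith [LC4, LC5.2, cap9, hpairG7, eC4]
  have eC7 : (H * (p b + 1) - p (hh 2)) / (p b + 1) = H - p (hh 2) / (p b + 1) := by
    rw [sub_div, mul_div_cancel_right₀ _ hb1'.ne']
  have hpairG3 : x C7 (Gg 2) + x C8 (Gg 2) ≤ ∑ i, x i (Gg 2) :=
    pair_le_sum (fun i => x i (Gg 2)) (fun i => hx0 i _) ha8_9
  have i3 : p (hh 4) / (p b + 1) ≤ p (hh 2) / (p b + 1) := by
    linarith [LC7, LC8, cap5, hpairG3, eC7]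
  have eC10 : (H * (p b + 1) - p (hh 4)) / (1 + p b) = H - p (hh 4) / (1 + p b) := by
    rw [sub_div, show H * (p b + 1) = H * (1 + p b) by ring,
      mul_div_cancel_right₀ _ hb1.ne']
  have hpairG4 : x A1 (Gg 3) + x C10 (Gg 3) ≤ ∑ i, x i (Gg 3) :=
    pair_le_sum (fun i => x i (Gg 3)) (fun i => hx0 i _) ha0_11
  have i4 : p c ≤ p (hh 4) / (1 + p b) := by linarith [LA1, LC10.1, cap6, hpairG4, eC10]
  have hpairG5 : x A2 (Gg 4) + x C10 (Gg 4) ≤ ∑ i, x i (Gg 4) :=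
    pair_le_sum (fun i => x i (Gg 4)) (fun i => hx0 i _) ha1_11
  have i5 : p a / p b ≤ p (hh 4) / (1 + p b) := by linarith [LA2, LC10.2, cap7, hpairG5, eC10]
  have ed2 : p (hh 2) / (p b + 1) = p (hh 2) / (1 + p b) := by rw [add_comm]
  have ed4 : p (hh 4) / (p b + 1) = p (hh 4) / (1 + p b) := by rw [add_comm]
  have hq3 : p (hh 2) / (1 + p b) = p c := le_antisymm i2 (by linarith [i3, i4, ed2, ed4])
  have hq5 : p (hh 4) / (1 + p b) = p c := le_antisymm (by linarith [i2, i3, ed2, ed4]) i4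
  have hqa : p a / p b = p c := le_antisymm (by linarith [i5, hq5]) (by linarith [i7, hq3])
  have hpa : p a = p b * p c := by
    have h := (div_eq_iff hpb.ne').mp hqa
    rw [h, mul_comm]
  -- final clearing results
  have rG1 := clear_single (fun i => x i (Gg 0)) (fun i => hx0 i _) C1 1 cap3 LC1.1
  have rG2 := clear_pair (fun i => x i (Gg 1)) (fun i => hx0 i _) ha3_6 H cap4
    (by linarith [LC2, LC5.1, hq3])
  have rG3 := clear_pair (fun i => x i (Gg 2)) (fun i => hx0 i _) ha8_9 H cap5
    (by linarith [LC7, LC8, eC7, ed2, ed4, hq3, hq5])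
  have rG4 := clear_pair (fun i => x i (Gg 3)) (fun i => hx0 i _) ha0_11 H cap6
    (by linarith [LA1, LC10.1, eC10, hq5])
  have rG5 := clear_pair (fun i => x i (Gg 4)) (fun i => hx0 i _) ha1_11 H cap7
    (by linarith [LA2, LC10.2, eC10, hq5, hqa])
  have rG6 := clear_single (fun i => x i (Gg 5)) (fun i => hx0 i _) C3 1 cap8 LC3.1
  have rG7 := clear_pair (fun i => x i (Gg 6)) (fun i => hx0 i _) ha5_6 H cap9
    (by linarith [LC4, LC5.2, eC4, hqa, hq3])
  have rh1 := clear_single (fun i => x i (hh 0)) (fun i => hx0 i _) C1 1 cap10 LC1.2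
  have rh2 := clear_single (fun i => x i (hh 1)) (fun i => hx0 i _) C3 1 cap11 LC3.2
  have rh3 := clear_single (fun i => x i (hh 2)) (fun i => hx0 i _) C6 1 cap12 LC6.1
  have rh4 := clear_single (fun i => x i (hh 3)) (fun i => hx0 i _) C6 1 cap13 LC6.2
  have rh5 := clear_single (fun i => x i (hh 4)) (fun i => hx0 i _) C9 1 cap14 LC9.1
  have rh6 := clear_single (fun i => x i (hh 5)) (fun i => hx0 i _) C9 1 cap15 LC9.2
  refine ⟨hpa, ?_, ?_⟩
  · intro k
    fin_cases k
    · exact ⟨rG1.1.trans sup3.symm, fun i hi => rG1.2 i (hout i hi).2.2.1⟩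
    · exact ⟨rG2.1.trans sup4.symm, fun i hi => rG2.2 i (hout i hi).2.2.2.1 (hout i hi).2.2.2.2.2.2.1⟩
    · exact ⟨rG3.1.trans sup5.symm, fun i hi => rG3.2 i (hout i hi).2.2.2.2.2.2.2.2.1 (hout i hi).2.2.2.2.2.2.2.2.2.1⟩
    · exact ⟨rG4.1.trans sup6.symm, fun i hi => rG4.2 i (hout i hi).1 (hout i hi).2.2.2.2.2.2.2.2.2.2.2⟩
    · exact ⟨rG5.1.trans sup7.symm, fun i hi => rG5.2 i (hout i hi).2.1 (hout i hi).2.2.2.2.2.2.2.2.2.2.2⟩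
    · exact ⟨rG6.1.trans sup8.symm, fun i hi => rG6.2 i (hout i hi).2.2.2.2.1⟩
    · exact ⟨rG7.1.trans sup9.symm, fun i hi => rG7.2 i (hout i hi).2.2.2.2.2.1 (hout i hi).2.2.2.2.2.2.1⟩
  · intro k
    fin_cases k
    · exact ⟨rh1.1.trans sup10.symm, fun i hi => rh1.2 i (hout i hi).2.2.1⟩
    · exact ⟨rh2.1.trans sup11.symm, fun i hi => rh2.2 i (hout i hi).2.2.2.2.1⟩
    · exact ⟨rh3.1.trans sup12.symm, fun i hi => rh3.2 i (hout i hi).2.2.2.2.2.2.2.1⟩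
    · exact ⟨rh4.1.trans sup13.symm, fun i hi => rh4.2 i (hout i hi).2.2.2.2.2.2.2.1⟩
    · exact ⟨rh5.1.trans sup14.symm, fun i hi => rh5.2 i (hout i hi).2.2.2.2.2.2.2.2.2.2.1⟩
    · exact ⟨rh6.1.trans sup15.symm, fun i hi => rh6.2 i (hout i hi).2.2.2.2.2.2.2.2.2.2.1⟩
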